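/- Let α ≥ 1, N₂ ≥ α²/(2α−1), and g(z) = α(3α−1)z − (α−1)² sin_α(z)cos_α(z). Then N₂ g(z) − z g'(z) ≥ 0 for all z ∈ [0, π_α], and consequently g(tz)/g(z) ≥ t^{N₂} for all 0 < t ≤ 1 and 0 < z ≤ π_α. -/

import Mathlib

open Set

private lemma rpow_key (α x : ℝ) (hα : 1 ≤ α) (hx : 0 ≤ x) :
    x * x ^ (2 * α - 1) = (x ^ 2) ^ α := by
  rcases eq_or_lt_of_le hx with h | h
  · rw [← h]
    simp [Real.zero_rpow (show (2 * α - 1) ≠ 0 by nlinarith),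
      Real.zero_rpow (show α ≠ 0 by nlinarith)]
  · have h1 : x * x ^ (2 * α - 1) = x ^ (1 + (2 * α - 1)) := by
      rw [Real.rpow_add h, Real.rpow_one]
    have h2 : (x ^ 2 : ℝ) ^ α = x ^ (2 * α) := by
      rw [← Real.rpow_natCast x 2, ← Real.rpow_mul hx]
      norm_num
    rw [h1, h2]
    congr 1
    ring

/-- for `α ≥ 1`, `N₂ ≥ α²/(2α−1)` and
`g(z) = α(3α−1)z − (α−1)² sin_α(z)cos_α(z)`, one has `N₂ g(z) − z g'(z) ≥ 0` on `[0, π_α]`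
(with `g'(z) = (α+1)(α² − (α−1)²cos_α(z)²)`), and consequently `g(tz)/g(z) ≥ t^{N₂}` for all
`0 < t ≤ 1`, `0 < z ≤ π_α`. -/
theorem stmt_16 (α : ℝ) (hα : 1 ≤ α) (N₂ : ℝ) (hN₂ : α ^ 2 / (2 * α - 1) ≤ N₂)
    (πα : ℝ) (hπα : 0 < πα) (s c : ℝ → ℝ)
    (hs : ∀ z ∈ Icc 0 πα, HasDerivWithinAt s (c z) (Icc 0 πα) z)
    (hc : ∀ z ∈ Icc 0 πα,
      HasDerivWithinAt c (-α * s z ^ (2 * α - 1)) (Icc 0 πα) z)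
    (hs0 : s 0 = 0)
    (hsnonneg : ∀ z ∈ Icc 0 πα, 0 ≤ s z)
    (hpyth : ∀ z ∈ Icc 0 πα, (s z ^ 2) ^ α + c z ^ 2 = 1)
    (hsc : ∀ z ∈ Icc 0 πα, s z * c z ≤ z) :
    (∀ z ∈ Icc 0 πα,
      N₂ * (α * (3 * α - 1) * z - (α - 1) ^ 2 * s z * c z)
        - z * ((α + 1) * (α ^ 2 - (α - 1) ^ 2 * c z ^ 2)) ≥ 0) ∧
    (∀ t ∈ Ioc (0 : ℝ) 1, ∀ z ∈ Ioc (0 : ℝ) πα,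
      (α * (3 * α - 1) * (t * z) - (α - 1) ^ 2 * s (t * z) * c (t * z)) /
          (α * (3 * α - 1) * z - (α - 1) ^ 2 * s z * c z)
        ≥ t ^ N₂) := by
  have h2α : (0:ℝ) < 2 * α - 1 := by linarith
  have hN : α ^ 2 ≤ N₂ * (2 * α - 1) := by
    have := (div_le_iff₀ h2α).mp hN₂; linarith
  have hN1 : (1:ℝ) ≤ N₂ := by nlinarith [sq_nonneg (α - 1)]
  -- the function g
  set G : ℝ → ℝ := fun v => α * (3 * α - 1) * v - (α - 1) ^ 2 * s v * c v with hGdef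
  -- squared cosine bounds
  have hC1 : ∀ z ∈ Icc 0 πα, c z ^ 2 ≤ 1 := by
    intro z hz
    have h1 := hpyth z hz
    have h2 : (0:ℝ) ≤ (s z ^ 2) ^ α := Real.rpow_nonneg (sq_nonneg _) _
    linarith
  -- part 1
  have part1 : ∀ z ∈ Icc 0 πα,
      N₂ * (α * (3 * α - 1) * z - (α - 1) ^ 2 * s z * c z)
        - z * ((α + 1) * (α ^ 2 - (α - 1) ^ 2 * c z ^ 2)) ≥ 0 := by
    intro z hz
    have hz0 : 0 ≤ z := hz.1
    have hA : s z * c z ≤ z := hsc z hz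
    have hC0 : (0:ℝ) ≤ c z ^ 2 := sq_nonneg _
    have hC1' := hC1 z hz
    have h1 : 0 ≤ N₂ * (α - 1) ^ 2 * (z - s z * c z) :=
      mul_nonneg (mul_nonneg (by linarith) (sq_nonneg _)) (by linarith)
    have h2 : 0 ≤ (N₂ * (2 * α - 1) - α ^ 2) * (α + 1) * z :=
      mul_nonneg (mul_nonneg (by linarith) (by linarith)) hz0
    have h3 : 0 ≤ z * (α + 1) * (α - 1) ^ 2 * (c z ^ 2) :=
      mul_nonneg (mul_nonneg (mul_nonneg hz0 (by linarith)) (sq_nonneg _)) hC0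
    nlinarith [h1, h2, h3]
  refine ⟨part1, ?_⟩
  -- derivative of G within the interval
  have hG : ∀ u ∈ Icc 0 πα,
      HasDerivWithinAt G ((α + 1) * (α ^ 2 - (α - 1) ^ 2 * c u ^ 2)) (Icc 0 πα) u := by
    intro u hu
    have hd : HasDerivWithinAt G
        (α * (3 * α - 1) * 1 -
          (((α - 1) ^ 2 * c u) * c u + ((α - 1) ^ 2 * s u) * (-α * s u ^ (2 * α - 1))))
        (Icc 0 πα) u := by
      exact ((hasDerivWithinAt_id u _).const_mul (α * (3 * α - 1))).sub
        ((((hs u hu).const_mul ((α - 1) ^ 2)).mul (hc u hu)))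
    have hkey : s u * s u ^ (2 * α - 1) = 1 - c u ^ 2 := by
      rw [rpow_key α (s u) hα (hsnonneg u hu)]
      have := hpyth u hu; linarith
    convert hd using 1
    linear_combination (-(α * (α - 1) ^ 2)) * hkey
  have hGcont : ContinuousOn G (Icc 0 πα) := fun u hu => (hG u hu).continuousWithinAt
  -- positivity of G
  have hGpos : ∀ z ∈ Ioc (0:ℝ) πα, 0 < G z := by
    intro z hz
    have hz' : z ∈ Icc 0 πα := ⟨hz.1.le, hz.2⟩
    have hA : s z * c z ≤ z := hsc z hz'
    have : (α - 1) ^ 2 * (z - s z * c z) ≥ 0 :=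
      mul_nonneg (sq_nonneg _) (by linarith)
    simp only [hGdef]
    nlinarith [hz.1]
  -- part 2
  intro t ht z hz
  have htz : 0 < t * z := mul_pos ht.1 hz.1
  -- the auxiliary function F u = G (u * z) * u ^ (-N₂) is antitone on [t, 1]
  set F : ℝ → ℝ := fun u => G (u * z) * u ^ (-N₂) with hFdef
  have hmaps : MapsTo (fun u : ℝ => u * z) (Icc t 1) (Icc 0 πα) := by
    intro u hu
    have h1 : u * z ≤ πα := by nlinarith [hu.2, hz.2, hz.1]
    exact ⟨mul_nonneg (le_trans ht.1.le hu.1) hz.1.le, h1⟩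
  have hFcont : ContinuousOn F (Icc t 1) := by
    apply ContinuousOn.mul
    · exact hGcont.comp ((continuous_mul_right z).continuousOn) hmaps
    · intro u hu
      exact (Real.continuousAt_rpow_const u (-N₂)
        (Or.inl (lt_of_lt_of_le ht.1 hu.1).ne')).continuousWithinAt
  have hFanti : AntitoneOn F (Icc t 1) := by
    apply antitoneOn_of_deriv_nonpos (convex_Icc t 1) hFcont
    · -- differentiability on the interior
      intro x hx
      rw [interior_Icc] at hx
      have hx0 : 0 < x := lt_trans ht.1 hx.1
      have hxz : x * z ∈ Ioo (0:ℝ) πα := by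
        refine ⟨mul_pos hx0 hz.1, ?_⟩
        nlinarith [hx.2, hz.2, hz.1]
      have hGat : HasDerivAt G ((α + 1) * (α ^ 2 - (α - 1) ^ 2 * c (x * z) ^ 2)) (x * z) :=
        (hG (x * z) ⟨hxz.1.le, hxz.2.le⟩).hasDerivAt (Icc_mem_nhds hxz.1 hxz.2)
      have hcomp : HasDerivAt (fun u : ℝ => G (u * z))
          ((α + 1) * (α ^ 2 - (α - 1) ^ 2 * c (x * z) ^ 2) * z) x :=
        by have := HasDerivAt.comp x hGat (hasDerivAt_mul_const z); exact this
      have hr : HasDerivAt (fun u : ℝ => u ^ (-N₂)) (-N₂ * x ^ (-N₂ - 1)) x :=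
        Real.hasDerivAt_rpow_const (Or.inl hx0.ne')
      exact ((hcomp.mul hr).differentiableAt).differentiableWithinAt
    · intro x hx
      rw [interior_Icc] at hx
      have hx0 : 0 < x := lt_trans ht.1 hx.1
      have hxz : x * z ∈ Ioo (0:ℝ) πα := by
        refine ⟨mul_pos hx0 hz.1, ?_⟩
        nlinarith [hx.2, hz.2, hz.1]
      have hGat : HasDerivAt G ((α + 1) * (α ^ 2 - (α - 1) ^ 2 * c (x * z) ^ 2)) (x * z) :=
        (hG (x * z) ⟨hxz.1.le, hxz.2.le⟩).hasDerivAt (Icc_mem_nhds hxz.1 hxz.2)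
      have hcomp : HasDerivAt (fun u : ℝ => G (u * z))
          ((α + 1) * (α ^ 2 - (α - 1) ^ 2 * c (x * z) ^ 2) * z) x :=
        by have := HasDerivAt.comp x hGat (hasDerivAt_mul_const z); exact this
      have hr : HasDerivAt (fun u : ℝ => u ^ (-N₂)) (-N₂ * x ^ (-N₂ - 1)) x :=
        Real.hasDerivAt_rpow_const (Or.inl hx0.ne')
      have hF' : HasDerivAt F
          ((α + 1) * (α ^ 2 - (α - 1) ^ 2 * c (x * z) ^ 2) * z * x ^ (-N₂)
            + G (x * z) * (-N₂ * x ^ (-N₂ - 1))) x := hcomp.mul hr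
      rw [hF'.deriv]
      -- the bracket estimate
      have hb := part1 (x * z) ⟨hxz.1.le, hxz.2.le⟩
      have hxp : (0:ℝ) < x ^ (-N₂ - 1) := Real.rpow_pos_of_pos hx0 _
      have hxe : x ^ (-N₂) = x ^ (-N₂ - 1) * x := by
        rw [← Real.rpow_add_one hx0.ne']
        congr 1; ring
      rw [hxe]
      have : (α + 1) * (α ^ 2 - (α - 1) ^ 2 * c (x * z) ^ 2) * z * (x ^ (-N₂ - 1) * x)
            + G (x * z) * (-N₂ * x ^ (-N₂ - 1))
          = x ^ (-N₂ - 1) *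
            ((x * z) * ((α + 1) * (α ^ 2 - (α - 1) ^ 2 * c (x * z) ^ 2)) - N₂ * G (x * z)) := by
        ring
      rw [this]
      apply mul_nonpos_of_nonneg_of_nonpos hxp.le
      simp only [hGdef]
      nlinarith [hb]
  -- conclude
  have h1mem : (1:ℝ) ∈ Icc t 1 := ⟨ht.2, le_refl 1⟩
  have htmem : t ∈ Icc t 1 := ⟨le_refl t, ht.2⟩
  have hFle : F 1 ≤ F t := hFanti htmem h1mem ht.2
  have hF1 : F 1 = G z := by
    simp only [hFdef, one_mul, Real.one_rpow, mul_one]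
  have hFt : F t = G (t * z) * (t ^ N₂)⁻¹ := by
    simp only [hFdef, Real.rpow_neg ht.1.le]
  have hGz : 0 < G z := hGpos z hz
  have htN : (0:ℝ) < t ^ N₂ := Real.rpow_pos_of_pos ht.1 _
  show G (t * z) / G z ≥ t ^ N₂
  rw [ge_iff_le, le_div_iff₀ hGz]
  have := mul_le_mul_of_nonneg_right hFle htN.le
  rw [hF1, hFt] at this
  calc t ^ N₂ * G z = G z * t ^ N₂ := by ring
    _ ≤ G (t * z) * (t ^ N₂)⁻¹ * t ^ N₂ := this
    _ = G (t * z) := by field_simp
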